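/- Let q_1,…,q_g, m_1,…,m_g be positive integers with gcd(q_k, m_k) = 1 for each k, set e_k = q_1⋯q_k, e = e_g, ê_k = e/e_k, B_0 = e and B_k = m_1·ê_1 + ⋯ + m_k·ê_k. Then for every k with 0 ≤ k ≤ g, gcd(B_0, B_1, …, B_k) = ê_k. In particular gcd(B_0, …, B_g) = 1. -/
import Mathlib


open Finset

/-- With `gcd (q k) (m k) = 1`, `ê_k = q_{k+1} ⋯ q_g`, `B_0 = e = q_1 ⋯ q_g`
and `B_k = Σ_{i=1}^k m_i ê_i`, one has `gcd(B_0, …, B_k) = ê_k` for all `k ≤ g`;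
in particular `gcd(B_0, …, B_g) = 1`. -/
theorem stmt1 (g : ℕ) (q m ehat B : ℕ → ℕ)
    (hq : ∀ i ∈ Icc 1 g, 0 < q i) (hm : ∀ i ∈ Icc 1 g, 0 < m i)
    (hcop : ∀ i ∈ Icc 1 g, Nat.Coprime (q i) (m i))
    (hehat : ∀ k, ehat k = ∏ j ∈ Icc (k + 1) g, q j)
    (hB0 : B 0 = ∏ j ∈ Icc 1 g, q j)
    (hB : ∀ k, 1 ≤ k → B k = ∑ i ∈ Icc 1 k, m i * ehat i) :
    (∀ k ≤ g, (Icc 0 k).gcd B = ehat k) ∧ (Icc 0 g).gcd B = 1 := by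
  have hehat' : ∀ k, ehat k = ∏ j ∈ Ioc k g, q j := by
    intro k; rw [hehat, Finset.Icc_add_one_left_eq_Ioc]
  have key : ∀ k ≤ g, (Icc 0 k).gcd B = ehat k := by
    intro k
    induction k with
    | zero =>
      intro _
      simp [hB0, hehat 0]
    | succ k ih =>
      intro hk1
      have hk : k ≤ g := Nat.le_of_succ_le hk1
      have hins : Icc 0 (k + 1) = insert (k + 1) (Icc 0 k) := by
        ext x; simp; omega
      rw [hins, Finset.gcd_insert, ih hk]
      show Nat.gcd (B (k + 1)) (ehat k) = ehat (k + 1)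
      -- ehat k = q (k+1) * ehat (k+1)
      have hsplit : ehat k = q (k + 1) * ehat (k + 1) := by
        rw [hehat' k, hehat' (k + 1),
          ← Finset.prod_Ioc_consecutive q (Nat.le_succ k) hk1]
        simp [Nat.Ioc_succ_singleton]
      -- factor ehat (k+1) out of B (k+1)
      have hfac : ∀ i ∈ Icc 1 (k + 1),
          m i * ehat i = (m i * ∏ j ∈ Ioc i (k + 1), q j) * ehat (k + 1) := by
        intro i hi
        simp only [mem_Icc] at hi
        rw [hehat' i, hehat' (k + 1), mul_assoc,
          Finset.prod_Ioc_consecutive q hi.2 hk1]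
      have hBk : B (k + 1) =
          (∑ i ∈ Icc 1 (k + 1), m i * ∏ j ∈ Ioc i (k + 1), q j) * ehat (k + 1) := by
        rw [hB (k + 1) (Nat.succ_le_succ (Nat.zero_le k)), Finset.sum_congr rfl hfac,
          ← Finset.sum_mul]
      rw [hBk, hsplit, Nat.gcd_mul_right]
      -- suffices: the cofactor is coprime to q (k+1)
      have hC : (∑ i ∈ Icc 1 (k + 1), m i * ∏ j ∈ Ioc i (k + 1), q j)
          = (∑ i ∈ Icc 1 k, m i * ∏ j ∈ Ioc i k, q j) * q (k + 1) + m (k + 1) := by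
        rw [Finset.sum_Icc_succ_top (Nat.succ_le_succ (Nat.zero_le k))]
        simp only [Ioc_self, Finset.prod_empty, mul_one]
        congr 1
        rw [Finset.sum_mul]
        refine Finset.sum_congr rfl fun i hi => ?_
        simp only [mem_Icc] at hi
        rw [mul_assoc, ← Finset.prod_Ioc_consecutive q hi.2 (Nat.le_succ k)]
        simp [Nat.Ioc_succ_singleton]
      rw [hC, Nat.add_comm, Nat.gcd_add_mul_right_left]
      have hcop' : Nat.gcd (m (k + 1)) (q (k + 1)) = 1 :=
        (hcop (k + 1) (by simp; omega)).symm
      rw [hcop', one_mul]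
  exact ⟨key, by rw [key g le_rfl, hehat' g, Ioc_self, Finset.prod_empty]⟩
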